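/- arXiv:0903.1335 — 9 statements merged into one kernel-verified Lean document; each statement's English description precedes it below -/
import Mathlib

section
/- The natural ring homomorphism R → R[S]/J induced by the inclusion R ⊆ R[S] is injective. -/
open Polynomial

/-- Let `R` be a commutative ring, `I = (f₁, …, fₙ)` a finitely generated ideal,
`s : I → R` an `R`-module homomorphism with `gᵢ = s fᵢ`, and
`J = (S·f₁ - g₁, …, S·fₙ - gₙ) ⊆ R[S]`.  Then the natural ring homomorphism
`R → R[S]/J` induced by the inclusion `R ⊆ R[S]` is injective. -/
theorem stmt_0 {R : Type} [CommRing R] {n : ℕ} (f g : Fin n → R)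
    (s : ↥(Ideal.span (Set.range f)) →ₗ[R] R)
    (hg : ∀ i, g i = s ⟨f i, Ideal.subset_span (Set.mem_range_self i)⟩)
    (J : Ideal (Polynomial R))
    (hJ : J = Ideal.span (Set.range fun i => X * Polynomial.C (f i) - Polynomial.C (g i))) :
    Function.Injective (fun r : R => Ideal.Quotient.mk J (Polynomial.C r)) := by
  -- reduce to kernel triviality
  intro a b hab
  simp only at hab
  have hmem : Polynomial.C (a - b) ∈ J := by
    have := Ideal.Quotient.eq.mp hab
    simpa [map_sub] using this
  set r := a - b with hr
  suffices hr0 : r = 0 by exact sub_eq_zero.mp hr0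
  -- get coefficients
  rw [hJ] at hmem
  rw [Ideal.mem_span_range_iff_exists_fun] at hmem
  obtain ⟨c, hc⟩ := hmem
  -- A j : element of I
  have Amem : ∀ j : ℕ, (∑ i, (c i).coeff j * f i) ∈ Ideal.span (Set.range f) := by
    intro j
    exact Ideal.sum_mem _ fun i _ =>
      Ideal.mul_mem_left _ _ (Ideal.subset_span (Set.mem_range_self i))
  set A : ℕ → ↥(Ideal.span (Set.range f)) := fun j => ⟨∑ i, (c i).coeff j * f i, Amem j⟩ with hA
  have hsA : ∀ j, s (A j) = ∑ i, (c i).coeff j * g i := by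
    intro j
    have : A j = ∑ i, (c i).coeff j • (⟨f i, Ideal.subset_span (Set.mem_range_self i)⟩ :
        ↥(Ideal.span (Set.range f))) := by
      apply Subtype.ext
      simp [hA]
    rw [this, map_sum]
    refine Finset.sum_congr rfl fun i _ => ?_
    rw [map_smul, smul_eq_mul, hg]
  -- coefficient equations
  have hcoeff : ∀ k, (∑ i, c i * (X * Polynomial.C (f i) - Polynomial.C (g i))).coeff k
      = (Polynomial.C r).coeff k := by
    intro k; rw [hc]
  have key : ∀ j : ℕ, (A j : R) = s (A (j + 1)) := by
    intro j
    have h := hcoeff (j + 1)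
    rw [Polynomial.finset_sum_coeff] at h
    simp only [mul_sub, coeff_sub, Polynomial.coeff_C, Nat.succ_ne_zero, if_neg] at h
    have h2 : ∀ i : Fin n, (c i * (X * Polynomial.C (f i))).coeff (j + 1)
        = (c i).coeff j * f i := by
      intro i
      rw [show c i * (X * Polynomial.C (f i)) = (c i * X) * Polynomial.C (f i) by ring,
        Polynomial.coeff_mul_C, Polynomial.coeff_mul_X]
    simp only [h2, Polynomial.coeff_mul_C, Finset.sum_sub_distrib] at h
    have h3 : (∑ i, (c i).coeff j * f i) - (∑ i, (c i).coeff (j+1) * g i) = 0 := by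
      simpa using h
    rw [hsA]
    have : (A j : R) = ∑ i, (c i).coeff j * f i := rfl
    rw [this]
    exact sub_eq_zero.mp h3
  have key0 : r = -(s (A 0)) := by
    have h := hcoeff 0
    rw [Polynomial.finset_sum_coeff] at h
    have h2 : ∀ i : Fin n, (c i * (X * Polynomial.C (f i))).coeff 0 = 0 := by
      intro i
      rw [show c i * (X * Polynomial.C (f i)) = (c i * X) * Polynomial.C (f i) by ring,
        Polynomial.coeff_mul_C, Polynomial.coeff_mul_X_zero, zero_mul]
    simp only [mul_sub, coeff_sub, h2, Polynomial.coeff_mul_C, Polynomial.coeff_C_zero,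
      zero_sub, Finset.sum_neg_distrib] at h
    rw [hsA]
    exact h.symm
  -- vanishing for large j
  set N : ℕ := (Finset.univ.sup fun i : Fin n => (c i).natDegree) + 1 with hN
  have hvan : ∀ j, N ≤ j → (A j : R) = 0 := by
    intro j hj
    have : ∀ i : Fin n, (c i).coeff j = 0 := by
      intro i
      have h1 : (c i).natDegree ≤ Finset.univ.sup fun i : Fin n => (c i).natDegree :=
        Finset.le_sup (f := fun i => (c i).natDegree) (Finset.mem_univ i)
      exact Polynomial.coeff_eq_zero_of_natDegree_lt (by omega)
    show (∑ i, (c i).coeff j * f i) = 0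
    simp [this]
  -- downward induction
  have main : ∀ d j, N ≤ j + d → (A j : R) = 0 := by
    intro d
    induction d with
    | zero => intro j hj; exact hvan j (by omega)
    | succ d ih =>
      intro j hj
      rw [key j]
      have : A (j + 1) = 0 := Subtype.ext (ih (j + 1) (by omega))
      rw [this, map_zero]
  have hA0 : A 0 = 0 := Subtype.ext (main N 0 (by omega))
  rw [key0, hA0, map_zero, neg_zero]
end

section
/- If a nonzero polynomial p ∈ R[S] of degree d (as a polynomial in S) lies in J, then there exist polynomials q₁,…,qₙ ∈ R[S], each of degree at most d−1 whenever nonzero, such that p = Σᵢ qᵢ·(S·fᵢ − gᵢ). -/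
open Polynomial

lemma stmt1_aux {R : Type} [CommRing R] {n : ℕ} (f g : Fin n → R)
    (s : ↥(Ideal.span (Set.range f)) →ₗ[R] R)
    (hg : ∀ i, g i = s ⟨f i, Ideal.subset_span (Set.mem_range_self i)⟩)
    (p : Polynomial R) (hp : p ≠ 0) :
    ∀ k (q : Fin n → Polynomial R),
      (∀ i, (q i).degree < ((p.natDegree + k : ℕ) : WithBot ℕ)) →
      p = ∑ i, q i * (X * Polynomial.C (f i) - Polynomial.C (g i)) →
      ∃ q' : Fin n → Polynomial R,
        (∀ i, (q' i).degree < p.degree) ∧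
        p = ∑ i, q' i * (X * Polynomial.C (f i) - Polynomial.C (g i)) := by
  intro k
  induction k with
  | zero =>
    intro q hdeg hrep
    refine ⟨q, fun i => ?_, hrep⟩
    rw [degree_eq_natDegree hp]
    simpa using hdeg i
  | succ k ih =>
    intro q hdeg hrep
    set d := p.natDegree + k with hd
    set a : Fin n → R := fun i => (q i).coeff d with ha
    have hdeg' : ∀ i, (q i).degree < ((d + 1 : ℕ) : WithBot ℕ) := by
      intro i; simpa [hd, Nat.add_assoc] using hdeg i
    have hsum0 : ∑ i, a i * f i = 0 := by
      have hcoeff : p.coeff (d+1) = ∑ i, a i * f i := by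
        conv_lhs => rw [hrep]
        rw [finset_sum_coeff]
        apply Finset.sum_congr rfl
        intro i _
        have he : q i * (X * C (f i) - C (g i)) = (q i * X) * C (f i) - q i * C (g i) := by ring
        rw [he, coeff_sub, coeff_mul_C, coeff_mul_C, coeff_mul_X]
        have h0 : (q i).coeff (d+1) = 0 :=
          coeff_eq_zero_of_degree_lt (by exact_mod_cast hdeg' i)
        rw [h0]; ring
      have hz : p.coeff (d+1) = 0 :=
        coeff_eq_zero_of_natDegree_lt (by omega)
      rw [hz] at hcoeff; exact hcoeff.symm
    have hsumg : ∑ i, a i * g i = 0 := by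
      have hx : (∑ i, a i • (⟨f i, Ideal.subset_span (Set.mem_range_self i)⟩ :
          Ideal.span (Set.range f))) = 0 := by
        apply Subtype.ext
        simp only [Submodule.coe_zero, AddSubmonoidClass.coe_finset_sum, SetLike.val_smul,
          smul_eq_mul]
        exact hsum0
      calc ∑ i, a i * g i
          = s (∑ i, a i • (⟨f i, Ideal.subset_span (Set.mem_range_self i)⟩ :
              Ideal.span (Set.range f))) := by
            rw [map_sum]
            apply Finset.sum_congr rfl
            intro i _
            rw [map_smul, smul_eq_mul, ← hg]
        _ = 0 := by rw [hx, map_zero]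
    set q' : Fin n → Polynomial R := fun i => q i - C (a i) * X ^ d with hq'
    have hrep' : p = ∑ i, q' i * (X * C (f i) - C (g i)) := by
      have h1 : ∑ i, (C (a i) * X ^ d) * (X * C (f i) - C (g i))
          = X ^ (d+1) * C (∑ i, a i * f i) - X ^ d * C (∑ i, a i * g i) := by
        rw [map_sum, map_sum, Finset.mul_sum, Finset.mul_sum, ← Finset.sum_sub_distrib]
        apply Finset.sum_congr rfl
        intro i _
        rw [C_mul, C_mul]
        ring
      have h2 : ∑ i, q' i * (X * C (f i) - C (g i))
          = (∑ i, q i * (X * C (f i) - C (g i)))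
            - ∑ i, (C (a i) * X ^ d) * (X * C (f i) - C (g i)) := by
        rw [← Finset.sum_sub_distrib]
        apply Finset.sum_congr rfl
        intro i _
        simp [hq']; ring
      rw [h2, h1, hsum0, hsumg]
      simp only [map_zero, mul_zero, sub_zero]
      exact hrep
    have hdegq' : ∀ i, (q' i).degree < ((p.natDegree + k : ℕ) : WithBot ℕ) := by
      intro i
      rw [← hd]
      rw [degree_lt_iff_coeff_zero]
      intro m hm
      have hm' : d ≤ m := by exact_mod_cast hm
      simp only [hq', coeff_sub, coeff_C_mul, coeff_X_pow]
      rcases eq_or_lt_of_le hm' with h | h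
      · subst h; simp [ha]
      · have : (q i).coeff m = 0 :=
          coeff_eq_zero_of_degree_lt (lt_of_lt_of_le (hdeg' i) (by exact_mod_cast h))
        simp [this, Nat.ne_of_lt h, (Nat.ne_of_lt h).symm]
    exact ih q' hdegq' hrep'

/-- If a nonzero polynomial `p ∈ R[S]` lies in
`J = (S·f₁ - g₁, …, S·fₙ - gₙ)`, then there exist `q₁, …, qₙ ∈ R[S]`, each of degree
strictly less than `deg p` (i.e. at most `deg p - 1` whenever nonzero), with
`p = Σᵢ qᵢ · (S·fᵢ - gᵢ)`. -/
theorem stmt_1 {R : Type} [CommRing R] {n : ℕ} (f g : Fin n → R)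
    (s : ↥(Ideal.span (Set.range f)) →ₗ[R] R)
    (hg : ∀ i, g i = s ⟨f i, Ideal.subset_span (Set.mem_range_self i)⟩)
    (J : Ideal (Polynomial R))
    (hJ : J = Ideal.span (Set.range fun i => X * Polynomial.C (f i) - Polynomial.C (g i)))
    (p : Polynomial R) (hp : p ≠ 0) (hpJ : p ∈ J) :
    ∃ q : Fin n → Polynomial R,
      (∀ i, (q i).degree < p.degree) ∧
      p = ∑ i, q i * (X * Polynomial.C (f i) - Polynomial.C (g i)) := by
  subst hJ
  rw [Ideal.mem_span_range_iff_exists_fun] at hpJ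
  obtain ⟨q, hq⟩ := hpJ
  set k := (∑ i, (q i).natDegree) + 1 with hk
  apply stmt1_aux f g s hg p hp k q ?_ hq.symm
  intro i
  calc (q i).degree ≤ ((q i).natDegree : WithBot ℕ) := degree_le_natDegree
    _ < ((p.natDegree + k : ℕ) : WithBot ℕ) := by
        rw [Nat.cast_lt]
        have : (q i).natDegree ≤ ∑ j, (q j).natDegree :=
          Finset.single_le_sum (f := fun j => (q j).natDegree) (fun j _ => Nat.zero_le _) (Finset.mem_univ i)
        omega
end

section
/- If p ∈ R ⊆ R[S] is a constant polynomial and there exists c ∈ R with S·p − c ∈ J, then p ∈ I. -/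
open Polynomial

/-- If `p ∈ R ⊆ R[S]` is a constant polynomial and there exists `c ∈ R` with
`S·p - c ∈ J`, then `p ∈ I = (f₁, …, fₙ)`. -/
theorem stmt_2 {R : Type} [CommRing R] {n : ℕ} (f g : Fin n → R)
    (s : ↥(Ideal.span (Set.range f)) →ₗ[R] R)
    (hg : ∀ i, g i = s ⟨f i, Ideal.subset_span (Set.mem_range_self i)⟩)
    (J : Ideal (Polynomial R))
    (hJ : J = Ideal.span (Set.range fun i => X * Polynomial.C (f i) - Polynomial.C (g i)))
    (p c : R) (h : X * Polynomial.C p - Polynomial.C c ∈ J) :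
    p ∈ Ideal.span (Set.range f) := by
  classical
  subst hJ
  rw [Ideal.mem_span_range_iff_exists_fun] at h
  obtain ⟨q, hq⟩ := h
  set F : ℕ → R := fun k => ∑ i, (q i).coeff k * f i with hF
  have hFmem : ∀ k, F k ∈ Ideal.span (Set.range f) := by
    intro k
    exact Ideal.sum_mem _ fun i _ =>
      Ideal.mul_mem_left _ _ (Ideal.subset_span (Set.mem_range_self i))
  -- s applied to F k
  have hsF : ∀ k, s ⟨F k, hFmem k⟩ = ∑ i, (q i).coeff k * g i := by
    intro k
    have : (⟨F k, hFmem k⟩ : Ideal.span (Set.range f)) =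
        ∑ i, (q i).coeff k • ⟨f i, Ideal.subset_span (Set.mem_range_self i)⟩ := by
      apply Subtype.ext
      simp [hF]
    rw [this, map_sum]
    simp_rw [map_smul, smul_eq_mul]
    exact Finset.sum_congr rfl fun i _ => by rw [hg i]
  have term : ∀ (i : Fin n) (k : ℕ),
      (q i * (X * C (f i) - C (g i))).coeff (k + 1)
        = (q i).coeff k * f i - (q i).coeff (k + 1) * g i := by
    intro i k
    rw [mul_sub, coeff_sub, mul_comm X (C (f i)), ← mul_assoc, coeff_mul_X,
      coeff_mul_C, coeff_mul_C]
  -- coefficient relations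
  have hcoeff : ∀ k : ℕ,
      F k - ∑ i, (q i).coeff (k + 1) * g i
        = (X * Polynomial.C p - Polynomial.C c).coeff (k + 1) := by
    intro k
    rw [← hq, finset_sum_coeff]
    simp_rw [term]
    rw [Finset.sum_sub_distrib]
  -- for k ≥ 1 the RHS coefficient is zero
  have hrec : ∀ k : ℕ, 1 ≤ k → F k = s ⟨F (k + 1), hFmem (k + 1)⟩ := by
    intro k hk
    have h1 := hcoeff k
    have h2 : (X * Polynomial.C p - Polynomial.C c).coeff (k + 1) = 0 := by
      rw [coeff_sub, mul_comm, coeff_C_mul, coeff_X, if_neg (by omega : ¬(1 = k + 1)),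
        coeff_C, if_neg (by omega : ¬(k + 1 = 0))]
      ring
    rw [h2, sub_eq_zero] at h1
    rw [hsF, ← h1]
  -- F k = 0 for large k
  obtain ⟨D, hD⟩ : ∃ D : ℕ, ∀ i k, D ≤ k → (q i).coeff k = 0 := by
    refine ⟨(Finset.univ.sup fun i => (q i).natDegree) + 1, fun i k hk => ?_⟩
    apply coeff_eq_zero_of_natDegree_lt
    have := Finset.le_sup (f := fun i => (q i).natDegree) (Finset.mem_univ i)
    omega
  have hFzero : ∀ m k, 1 ≤ k → D ≤ k + m → F k = 0 := by
    intro m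
    induction m with
    | zero => intro k _ hk; simp only [Nat.add_zero] at hk
              exact Finset.sum_eq_zero fun i _ => by rw [hD i k hk, zero_mul]
    | succ m ih =>
        intro k hk1 hk
        by_cases hDk : D ≤ k
        · exact Finset.sum_eq_zero fun i _ => by rw [hD i k hDk, zero_mul]
        · have h0 : F (k + 1) = 0 := ih (k + 1) (by omega) (by omega)
          rw [hrec k hk1]
          have h0' : (⟨F (k + 1), hFmem (k + 1)⟩ :
              Ideal.span (Set.range f)) = 0 := Subtype.ext h0
          rw [h0', map_zero]
  have hF1 : F 1 = 0 := hFzero D 1 le_rfl (by omega)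
  -- coefficient 1 gives p = F 0
  have h1 := hcoeff 0
  have h2 : (X * Polynomial.C p - Polynomial.C c).coeff 1 = p := by
    rw [coeff_sub, mul_comm, coeff_C_mul, coeff_X]
    simp
  rw [h2] at h1
  have h3 : ∑ i, (q i).coeff 1 * g i = 0 := by
    rw [← hsF 1]
    have : (⟨F 1, hFmem 1⟩ : Ideal.span (Set.range f)) = 0 := Subtype.ext hF1
    rw [this, map_zero]
  rw [h3, sub_zero] at h1
  rw [← h1]
  exact hFmem 0
end

section
/- If p ∈ R[S] has degree at least 1 in S and there exists c ∈ R with S·p − c ∈ J, then there exists p₁ ∈ R[S] of strictly smaller degree such that p − p₁ ∈ J and S·p₁ − c ∈ J. -/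
open Polynomial

/-- If `p ∈ R[S]` has degree at least `1` in `S` and there exists `c ∈ R` with
`S·p - c ∈ J`, then there exists `p₁ ∈ R[S]` of strictly smaller degree with
`p - p₁ ∈ J` and `S·p₁ - c ∈ J`. -/
theorem stmt_3 {R : Type} [CommRing R] {n : ℕ} (f g : Fin n → R)
    (s : ↥(Ideal.span (Set.range f)) →ₗ[R] R)
    (hg : ∀ i, g i = s ⟨f i, Ideal.subset_span (Set.mem_range_self i)⟩)
    (J : Ideal (Polynomial R))
    (hJ : J = Ideal.span (Set.range fun i => X * Polynomial.C (f i) - Polynomial.C (g i)))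
    (p : Polynomial R) (hdeg : 1 ≤ p.natDegree) (c : R)
    (h : X * p - Polynomial.C c ∈ J) :
    ∃ p₁ : Polynomial R, p₁.degree < p.degree ∧ p - p₁ ∈ J ∧
      X * p₁ - Polynomial.C c ∈ J := by
  have hp0 : p ≠ 0 := by
    intro h0
    rw [h0, natDegree_zero] at hdeg
    omega
  set d := p.natDegree with hd
  obtain ⟨hv, hq⟩ : ∃ hv : Fin n → Polynomial R,
      (∑ i, hv i * (X * C (f i) - C (g i))) = X * p - C c := by
    rw [hJ] at h
    obtain ⟨hv, hhv⟩ := (Submodule.mem_span_range_iff_exists_fun _).mp h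
    exact ⟨hv, by simpa [smul_eq_mul] using hhv⟩
  set A : ℕ → R := fun k => ∑ i, (hv i).coeff k * f i with hA
  set G : ℕ → R := fun k => ∑ i, (hv i).coeff k * g i with hG
  -- coefficient recurrence
  have hqc : ∀ k, p.coeff k = A k - G (k+1) := by
    intro k
    have h1 : (X * p - C c).coeff (k+1) = p.coeff k := by
      simp [coeff_X_mul]
    rw [← hq] at h1
    rw [← h1, finset_sum_coeff]
    have h2 : ∀ i : Fin n, (hv i * (X * C (f i) - C (g i))).coeff (k+1)
        = (hv i).coeff k * f i - (hv i).coeff (k+1) * g i := by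
      intro i
      have : hv i * (X * C (f i) - C (g i)) = (hv i * X) * C (f i) - hv i * C (g i) := by
        ring
      rw [this, coeff_sub, coeff_mul_C, coeff_mul_C, coeff_mul_X]
    simp only [h2]
    rw [Finset.sum_sub_distrib]
  -- A k = 0 implies G k = 0 via the section s
  have hAG : ∀ k, A k = 0 → G k = 0 := by
    intro k hAk
    have hu : (∑ i, (hv i).coeff k •
        (⟨f i, Ideal.subset_span (Set.mem_range_self i)⟩ :
          ↥(Ideal.span (Set.range f)))) = 0 := by
      apply Subtype.ext
      push_cast
      simpa [hA, smul_eq_mul] using hAk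
    have := congrArg s hu
    rw [map_sum, map_zero] at this
    simp only [map_smul, smul_eq_mul] at this
    rw [hG]
    calc (∑ i, (hv i).coeff k * g i)
        = ∑ i, (hv i).coeff k * s ⟨f i, Ideal.subset_span (Set.mem_range_self i)⟩ := by
          refine Finset.sum_congr rfl fun i _ => by rw [hg i]
      _ = 0 := this
  -- coefficients of hv vanish eventually
  obtain ⟨N, hN⟩ : ∃ N, ∀ (i : Fin n) (k : ℕ), N ≤ k → (hv i).coeff k = 0 := by
    refine ⟨(Finset.univ.sup fun i => (hv i).natDegree) + 1, fun i k hk => ?_⟩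
    apply coeff_eq_zero_of_natDegree_lt
    have : (hv i).natDegree ≤ Finset.univ.sup fun i => (hv i).natDegree :=
      Finset.le_sup (f := fun i => (hv i).natDegree) (Finset.mem_univ i)
    omega
  -- downward induction: A k = 0 for k ≥ d + 1
  have key : ∀ m : ℕ, ∀ k : ℕ, d + 1 ≤ k → N ≤ k + m → A k = 0 := by
    intro m
    induction m with
    | zero =>
      intro k hk1 hk2
      rw [hA]
      apply Finset.sum_eq_zero
      intro i _
      rw [hN i k (by omega), zero_mul]
    | succ m ih =>
      intro k hk1 hk2
      by_cases h' : N ≤ k + m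
      · exact ih k hk1 h'
      · have hA1 : A (k+1) = 0 := ih (k+1) (by omega) (by omega)
        have hG1 : G (k+1) = 0 := hAG _ hA1
        have hc : p.coeff k = 0 := coeff_eq_zero_of_natDegree_lt (by omega)
        have := hqc k
        rw [hc, hG1] at this
        rw [sub_zero] at this
        exact this.symm
  have hAzero : ∀ k, d + 1 ≤ k → A k = 0 := fun k hk => key N k hk (by omega)
  have ha : p.coeff d = A d := by
    have := hqc d
    rw [hAG _ (hAzero (d+1) (by omega))] at this
    simpa using this
  obtain ⟨e, he⟩ : ∃ e, d = 1 + e := Nat.exists_eq_add_of_le hdeg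
  -- the degree-1 element of J
  have hmem : X * C (A d) - C (G d) ∈ J := by
    have : X * C (A d) - C (G d)
        = ∑ i, C ((hv i).coeff d) * (X * C (f i) - C (g i)) := by
      rw [hA, hG, map_sum, map_sum, Finset.mul_sum, ← Finset.sum_sub_distrib]
      refine Finset.sum_congr rfl fun i _ => ?_
      simp only [map_mul]
      ring
    rw [this, hJ]
    refine Ideal.sum_mem _ fun i _ => Ideal.mul_mem_left _ _ ?_
    exact Ideal.subset_span ⟨i, rfl⟩
  set p₁ : Polynomial R := p - C (A d) * X ^ d + C (G d) * X ^ e with hp₁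
  have hdiff : p - p₁ = X ^ e * (X * C (A d) - C (G d)) := by
    rw [hp₁, he]
    ring
  have hdiffJ : p - p₁ ∈ J := by
    rw [hdiff]
    exact Ideal.mul_mem_left _ _ hmem
  refine ⟨p₁, ?_, hdiffJ, ?_⟩
  · rw [degree_eq_natDegree hp0, ← hd]
    rw [degree_lt_iff_coeff_zero]
    intro m hm
    have hm' : d ≤ m := by exact_mod_cast hm
    rw [hp₁]
    simp only [coeff_add, coeff_sub, coeff_C_mul, coeff_X_pow]
    rcases eq_or_lt_of_le hm' with heq | hlt
    · rw [← heq]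
      simp [ha, show ¬ (d = e) by omega]
    · rw [coeff_eq_zero_of_natDegree_lt (by omega)]
      simp [show ¬ (m = d) by omega, show ¬ (m = e) by omega]
  · have : X * p₁ - C c = (X * p - C c) - X * (p - p₁) := by ring
    rw [this]
    exact Ideal.sub_mem _ h (Ideal.mul_mem_left _ _ hdiffJ)
end

section
/- If p ∈ R[S] and there exists c ∈ R with S·p − c ∈ J, then there exists p₁ ∈ I ⊆ R such that p − p₁ ∈ J. In particular, in the quotient ring R[S]/J, if an element a satisfies a·s ∈ R (where s denotes the image of S), then a lies in the image of I. -/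
open Polynomial

/-- If `p ∈ R[S]` and there exists `c ∈ R` with `S·p - c ∈ J`, then there exists
`p₁ ∈ I ⊆ R` with `p - p₁ ∈ J`.  In particular, in `R[S]/J`, if an element `a`
satisfies `a·s ∈ R` (where `s` is the image of `S`), then `a` lies in the image of `I`. -/
theorem stmt_4 {R : Type} [CommRing R] {n : ℕ} (f g : Fin n → R)
    (s : ↥(Ideal.span (Set.range f)) →ₗ[R] R)
    (hg : ∀ i, g i = s ⟨f i, Ideal.subset_span (Set.mem_range_self i)⟩)
    (J : Ideal (Polynomial R))
    (hJ : J = Ideal.span (Set.range fun i => X * Polynomial.C (f i) - Polynomial.C (g i))) :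
    (∀ (p : Polynomial R) (c : R), X * p - Polynomial.C c ∈ J →
       ∃ p₁ ∈ Ideal.span (Set.range f), p - Polynomial.C p₁ ∈ J) ∧
    (∀ a : Polynomial R ⧸ J,
       (∃ r : R, a * Ideal.Quotient.mk J X = Ideal.Quotient.mk J (Polynomial.C r)) →
       ∃ p₁ ∈ Ideal.span (Set.range f), a = Ideal.Quotient.mk J (Polynomial.C p₁)) := by
  have key : ∀ (p : Polynomial R) (c : R), X * p - Polynomial.C c ∈ J →
       ∃ p₁ ∈ Ideal.span (Set.range f), p - Polynomial.C p₁ ∈ J := by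
    intro p c hpc
    set d : Fin n → Polynomial R := fun i => X * Polynomial.C (f i) - Polynomial.C (g i) with hd
    rw [hJ] at hpc
    obtain ⟨h, hsum⟩ := (Submodule.mem_span_range_iff_exists_fun _).mp hpc
    set a : Fin n → R := fun i => (h i).coeff 0 with ha
    set q : Fin n → Polynomial R := fun i => (h i).divX with hq
    set p₁ : R := ∑ i, a i * f i with hp₁
    set Q : Polynomial R := ∑ i, q i * d i with hQ
    have e : ∀ i ∈ Finset.univ, h i • d i
        = X * (q i * d i) + (X * Polynomial.C (a i * f i) - Polynomial.C (a i * g i)) := by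
      intro i _
      conv_lhs => rw [smul_eq_mul, ← divX_mul_X_add (h i)]
      simp only [hd, map_mul]
      ring
    have keysum : ∑ i, h i • d i
        = X * Q + (X * Polynomial.C p₁ - Polynomial.C (∑ i, a i * g i)) := by
      rw [Finset.sum_congr rfl e, Finset.sum_add_distrib, Finset.sum_sub_distrib,
        ← Finset.mul_sum, hp₁, map_sum, map_sum, Finset.mul_sum, Finset.mul_sum]
    have main : X * (p - Q - Polynomial.C p₁)
        = Polynomial.C c - Polynomial.C (∑ i, a i * g i) := by
      linear_combination keysum - hsum
    have hc : (Polynomial.C c : Polynomial R) = Polynomial.C (∑ i, a i * g i) := by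
      have h0 := congrArg (fun r => Polynomial.coeff r 0) main
      simp only [mul_coeff_zero, coeff_X_zero, zero_mul, coeff_sub, coeff_C_zero] at h0
      rw [eq_comm, sub_eq_zero] at h0
      rw [h0]
    have h0 : X * (p - Q - Polynomial.C p₁) = 0 := by rw [main, hc, sub_self]
    have hr : p - Q - Polynomial.C p₁ = 0 := by
      ext k
      have := congrArg (fun r => Polynomial.coeff r (k + 1)) h0
      simpa [coeff_X_mul] using this
    refine ⟨p₁, ?_, ?_⟩
    · rw [hp₁]
      exact Ideal.sum_mem _ fun i _ =>
        Ideal.mul_mem_left _ _ (Ideal.subset_span (Set.mem_range_self i))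
    · have : p - Polynomial.C p₁ = Q := by linear_combination hr
      rw [this, hJ, hQ]
      exact Ideal.sum_mem _ fun i _ =>
        Ideal.mul_mem_left _ _ (Ideal.subset_span (Set.mem_range_self i))
  refine ⟨key, ?_⟩
  intro a ⟨r, hr⟩
  obtain ⟨p, rfl⟩ := Ideal.Quotient.mk_surjective a
  have hmem : X * p - Polynomial.C r ∈ J := by
    rw [← Ideal.Quotient.eq_zero_iff_mem, map_sub, map_mul, mul_comm, hr, sub_self]
  obtain ⟨p₁, hp₁, hp₁'⟩ := key p r hmem
  exact ⟨p₁, hp₁, (Ideal.Quotient.eq (I := J)).mpr hp₁'⟩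
end

section
/- For u ∈ 𝓜 and w ∈ 𝓛 \ 𝓜, the equality r·A_uw = φ_wu(r)·(y_u + C_uw) holds in R_𝓜 for all r ∈ I_w. -/
open CategoryTheory

noncomputable section

/-- A commutative ring is Gorenstein if it is Noetherian and has finite injective
dimension as a module over itself, expressed via vanishing of `Ext^i(-, R)` for
large `i`. -/
def IsGorensteinRing (R : Type) [CommRing R] : Prop :=
  IsNoetherianRing R ∧ ∃ n : ℕ, ∀ (M : ModuleCat R) (i : ℕ), n < i →
    Subsingleton (((Ext R (ModuleCat R) i).obj (Opposite.op M)).obj (ModuleCat.of R R))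

/-- The height (codimension) of an ideal: the infimum of the heights of the primes
containing it. -/
def idealHeight {R : Type} [CommRing R] (I : Ideal R) : ℕ∞ :=
  ⨅ (P : PrimeSpectrum R) (_ : I ≤ P.asIdeal), Order.height P

/-- The ideal of relations defining the parallel unprojection ring `R_𝓜`:
the quotient of `R[y_u : u ∈ 𝓜]` by the relations `y_u·r - φ_u(r)` for `r ∈ I_u`
and `(y_v + C_vu)(y_u + C_uv) - A_vu` for distinct `u, v ∈ 𝓜`. -/
def unprojIdeal {R 𝓛 : Type} [CommRing R] (I : 𝓛 → Ideal R)
    (φ : ∀ a, ↥(I a) →ₗ[R] R) (cc AA : 𝓛 → 𝓛 → R) (𝓜 : Set 𝓛) :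
    Ideal (MvPolynomial ↥𝓜 R) :=
  Ideal.span
    ({p | ∃ (u : 𝓜) (r : ↥(I ↑u)), p =
        MvPolynomial.X u * MvPolynomial.C (r : R) - MvPolynomial.C (φ ↑u r)} ∪
     {p | ∃ u v : 𝓜, (u : 𝓛) ≠ ↑v ∧ p =
        (MvPolynomial.X v + MvPolynomial.C (cc ↑v ↑u)) *
        (MvPolynomial.X u + MvPolynomial.C (cc ↑u ↑v)) - MvPolynomial.C (AA ↑v ↑u)})

/-- The unprojection ideal `J_{𝓜,w} ⊆ R_𝓜`: generated by the images of `I_w`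
and of the elements `y_u + C_uw` for `u ∈ 𝓜`. -/
def Junproj {R 𝓛 : Type} [CommRing R] (I : 𝓛 → Ideal R)
    (φ : ∀ a, ↥(I a) →ₗ[R] R) (cc AA : 𝓛 → 𝓛 → R) (𝓜 : Set 𝓛) (w : 𝓛) :
    Ideal (MvPolynomial ↥𝓜 R ⧸ unprojIdeal I φ cc AA 𝓜) :=
  Ideal.span
    ((fun r : R => Ideal.Quotient.mk (unprojIdeal I φ cc AA 𝓜) (MvPolynomial.C r)) ''
        (I w : Set R) ∪
     Set.range fun u : 𝓜 =>
        Ideal.Quotient.mk (unprojIdeal I φ cc AA 𝓜)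
          (MvPolynomial.X u + MvPolynomial.C (cc ↑u w)))

/-- Lemma 2.15: for `u ∈ 𝓜` and `w ∈ 𝓛 \ 𝓜`, the equality
`r·A_uw = φ_wu(r)·(y_u + C_uw)` holds in `R_𝓜` for all `r ∈ I_w`. -/
theorem stmt_11
    {K R : Type} [Field K] [CommRing R] [Algebra K R]
    (𝒜 : ℕ → Submodule K R) [GradedAlgebra 𝒜]
    (h0 : ∀ x ∈ 𝒜 0, ∃ c : K, algebraMap K R c = x)
    (hGor : IsGorensteinRing R)
    {𝓛 : Type} [Fintype 𝓛] [Nonempty 𝓛]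
    (I : 𝓛 → Ideal R)
    (hIhom : ∀ a, (I a).IsHomogeneous 𝒜)
    (hIht : ∀ a, idealHeight (I a) = 1)
    (hIGor : ∀ a, IsGorensteinRing (R ⧸ I a))
    (hht2 : ∀ a b, a ≠ b → 2 ≤ idealHeight (I a ⊔ I b))
    (φ : ∀ a, ↥(I a) →ₗ[R] R) (d : 𝓛 → ℕ) (hd : ∀ a, 0 < d a)
    (hφgr : ∀ a (n : ℕ) (x : ↥(I a)), (x : R) ∈ 𝒜 n → φ a x ∈ 𝒜 (n + d a))
    (hgen : ∀ a, Submodule.span R {(I a).subtype, φ a} = ⊤)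
    (cc : 𝓛 → 𝓛 → R)
    (hcchom : ∀ a b, a ≠ b → cc a b ∈ 𝒜 (d a))
    (hcc : ∀ a b (_ : a ≠ b) (x : ↥(I a)), φ a x + cc a b * ↑x ∈ I b)
    (AA : 𝓛 → 𝓛 → R)
    (hAA : ∀ a b (hab : a ≠ b) (x : ↥(I a)),
      φ b ⟨φ a x + cc a b * ↑x, hcc a b hab x⟩ + cc b a * (φ a x + cc a b * ↑x)
        = AA a b * ↑x)
    (𝓜 : Set 𝓛) (u : 𝓛) (hu : u ∈ 𝓜) (w : 𝓛) (hw : w ∉ 𝓜) (r : ↥(I w)) :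
    Ideal.Quotient.mk (unprojIdeal I φ cc AA 𝓜) (MvPolynomial.C ((r : R) * AA w u)) =
      Ideal.Quotient.mk (unprojIdeal I φ cc AA 𝓜) (MvPolynomial.C (φ w r + cc w u * ↑r)) *
        (Ideal.Quotient.mk (unprojIdeal I φ cc AA 𝓜) (MvPolynomial.X (⟨u, hu⟩ : ↥𝓜)) + Ideal.Quotient.mk (unprojIdeal I φ cc AA 𝓜) (MvPolynomial.C (cc u w))) := by
  have hne : w ≠ u := fun h => hw (h ▸ hu)
  set Q := Ideal.Quotient.mk (unprojIdeal I φ cc AA 𝓜) with hQ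
  set s : ↥(I u) := ⟨φ w r + cc w u * (r : R), hcc w u hne r⟩ with hs
  have hmem : (MvPolynomial.X (⟨u, hu⟩ : ↥𝓜) * MvPolynomial.C ((s : R)) -
      MvPolynomial.C (φ u s)) ∈ unprojIdeal I φ cc AA 𝓜 :=
    Ideal.subset_span (Or.inl ⟨⟨u, hu⟩, s, rfl⟩)
  have h1 : Q (MvPolynomial.X (⟨u, hu⟩ : ↥𝓜)) * Q (MvPolynomial.C ((s : R))) =
      Q (MvPolynomial.C (φ u s)) := by
    rw [← map_mul, ← sub_eq_zero, ← map_sub]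
    exact Ideal.Quotient.eq_zero_iff_mem.2 hmem
  have hA := hAA w u hne r
  have hsr : (MvPolynomial.C (φ w r + cc w u * (r : R)) : MvPolynomial ↥𝓜 R) =
      MvPolynomial.C ((s : R)) := rfl
  calc Q (MvPolynomial.C ((r : R) * AA w u))
      = Q (MvPolynomial.C (φ u s + cc u w * (s : R))) := by
        rw [mul_comm, ← hA]
    _ = Q (MvPolynomial.C (φ u s)) +
        Q (MvPolynomial.C (cc u w)) * Q (MvPolynomial.C ((s : R))) := by
        rw [map_add, map_add, map_mul, map_mul]
    _ = Q (MvPolynomial.C ((s : R))) *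
        (Q (MvPolynomial.X (⟨u, hu⟩ : ↥𝓜)) + Q (MvPolynomial.C (cc u w))) := by
        rw [← h1]; ring
    _ = _ := by rw [hsr]
end
end

section
/- The sequence f₁,…,f_{n−1} is a regular sequence in S, where f_m = Σ_{l=1}^n a_{ml}·X_l and X_i = x_{i1}x_{i2}···x_{i k_i}, provided the coefficients a_{ml} ∈ 𝕂 are general (e.g., all maximal minors of the coefficient matrix are nonzero). -/
open MvPolynomial
open RingTheory.Sequence Pointwise Finsupp

set_option linter.unusedSectionVars false
set_option linter.unusedVariables false

section helpers
variable {R S : Type*} [CommRing R] [CommRing S]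

lemma ringEquiv_isWeaklyRegular (e : R ≃+* S) (rs : List R) :
    IsWeaklyRegular R rs ↔ IsWeaklyRegular S (rs.map e) :=
  e.toAddEquiv.isWeaklyRegular_congr <| List.forall₂_map_right_iff.mpr <|
    List.forall₂_same.mpr fun r _ x => by
      simp [smul_eq_mul, map_mul]

lemma quotCons (φ : R →+* S) (hs : Function.Surjective φ) (r : R)
    (hker : RingHom.ker φ = Ideal.span {r}) (hreg : IsSMulRegular R r) (rs : List R)
    (h : IsWeaklyRegular S (rs.map φ)) :
    IsWeaklyRegular R (r :: rs) := by
  letI : Algebra R S := φ.toAlgebra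
  have hsub : (r • ⊤ : Submodule R R) = Ideal.span {r} := by
    rw [← Submodule.ideal_span_singleton_smul, Ideal.smul_eq_mul, Ideal.mul_top]
  have hle : (r • ⊤ : Submodule R R) ≤ LinearMap.ker (Algebra.linearMap R S) := by
    rw [hsub]
    intro x hx
    simpa [LinearMap.mem_ker, Algebra.linearMap_apply, RingHom.algebraMap_toAlgebra,
      ← hker] using hx
  let ℓ : QuotSMulTop r R →ₗ[R] S := Submodule.liftQ _ (Algebra.linearMap R S) hle
  have hinj : Function.Injective ℓ := by
    rw [← LinearMap.ker_eq_bot, Submodule.ker_liftQ_eq_bot]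
    intro x hx
    rw [hsub]
    simpa [LinearMap.mem_ker, Algebra.linearMap_apply, RingHom.algebraMap_toAlgebra,
      ← hker] using hx
  have hsurj : Function.Surjective ℓ := by
    intro s
    obtain ⟨x, rfl⟩ := hs s
    exact ⟨Submodule.Quotient.mk x, rfl⟩
  let e : QuotSMulTop r R ≃+ S := (LinearEquiv.ofBijective ℓ ⟨hinj, hsurj⟩).toAddEquiv
  refine (isWeaklyRegular_cons_iff R r rs).mpr ⟨hreg, ?_⟩
  refine (e.isWeaklyRegular_congr ?_).mpr h
  refine List.forall₂_map_right_iff.mpr <| List.forall₂_same.mpr fun a _ x => ?_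
  obtain ⟨y, rfl⟩ := Submodule.Quotient.mk_surjective _ x
  show ℓ (a • Submodule.Quotient.mk y) = φ a • ℓ (Submodule.Quotient.mk y)
  rw [← Submodule.Quotient.mk_smul]
  simp only [ℓ, Submodule.liftQ_apply, Algebra.linearMap_apply, RingHom.algebraMap_toAlgebra,
    smul_eq_mul, map_mul]

end helpers

section var
variable {𝕂 : Type} [Field 𝕂]

noncomputable def killOne {σ : Type} [DecidableEq σ] (i : σ) :
    MvPolynomial σ 𝕂 →ₐ[𝕂] MvPolynomial {j : σ // j ≠ i} 𝕂 :=
  aeval fun j => if h : j = i then 0 else X ⟨j, h⟩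

lemma killOne_X_ne {σ : Type} [DecidableEq σ] {i j : σ} (h : j ≠ i) :
    killOne (𝕂 := 𝕂) i (X j) = X ⟨j, h⟩ := by
  simp [killOne, h]

lemma killOne_X_self {σ : Type} [DecidableEq σ] (i : σ) :
    killOne (𝕂 := 𝕂) i (X i) = 0 := by
  simp [killOne]

lemma killOne_surjective {σ : Type} [DecidableEq σ] (i : σ) :
    Function.Surjective (killOne (𝕂 := 𝕂) i) := by
  intro p
  refine ⟨rename Subtype.val p, ?_⟩
  rw [killOne, aeval_rename]
  have : ((fun j => if h : j = i then (0 : MvPolynomial {j : σ // j ≠ i} 𝕂) else X ⟨j, h⟩) ∘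
      (Subtype.val : {j : σ // j ≠ i} → σ)) = X := by
    funext j'
    simp [j'.2]
  rw [this, aeval_X_left_apply]

lemma killOne_sub_mem {σ : Type} [DecidableEq σ] (i : σ) (p : MvPolynomial σ 𝕂) :
    p - rename Subtype.val (killOne (𝕂 := 𝕂) i p) ∈ Ideal.span {(X i : MvPolynomial σ 𝕂)} := by
  induction p using MvPolynomial.induction_on with
  | C a => simp [killOne, aeval_C, algebraMap_eq]
  | add p q hp hq =>
    have : p + q - rename Subtype.val (killOne (𝕂 := 𝕂) i (p + q)) =
        (p - rename Subtype.val (killOne (𝕂 := 𝕂) i p)) +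
        (q - rename Subtype.val (killOne (𝕂 := 𝕂) i q)) := by
      rw [map_add, map_add]; ring
    rw [this]; exact Ideal.add_mem _ hp hq
  | mul_X p j hp =>
    by_cases hj : j = i
    · subst hj
      rw [map_mul, killOne_X_self, mul_zero, map_zero, sub_zero]
      exact Ideal.mem_span_singleton.mpr ⟨p, mul_comm _ _⟩
    · rw [map_mul, killOne_X_ne hj, map_mul, rename_X]
      have : p * X j - rename Subtype.val (killOne (𝕂 := 𝕂) i p) * X j =
          (p - rename Subtype.val (killOne (𝕂 := 𝕂) i p)) * X j := by ring
      rw [this]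
      exact Ideal.mul_mem_right _ _ hp

lemma killOne_ker {σ : Type} [DecidableEq σ] (i : σ) :
    RingHom.ker (killOne (𝕂 := 𝕂) i).toRingHom = Ideal.span {(X i : MvPolynomial σ 𝕂)} := by
  ext p
  simp only [RingHom.mem_ker, AlgHom.toRingHom_eq_coe, RingHom.coe_coe]
  constructor
  · intro hp
    have := killOne_sub_mem i p
    rwa [hp, map_zero, sub_zero] at this
  · intro hp
    obtain ⟨q, rfl⟩ := Ideal.mem_span_singleton.mp hp
    rw [map_mul, killOne_X_self, zero_mul]

lemma varReg (𝕂 : Type) [Field 𝕂] : ∀ (n : ℕ) (σ : Type) [DecidableEq σ] (v : Fin n → σ),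
    Function.Injective v →
    IsWeaklyRegular (MvPolynomial σ 𝕂) (List.ofFn fun m => (X (v m) : MvPolynomial σ 𝕂))
  | 0, σ, _, v, hv => by
    simp only [List.ofFn_zero]
    exact IsWeaklyRegular.nil _ _
  | n + 1, σ, _, v, hv => by
    rw [List.ofFn_succ]
    have hreg : IsSMulRegular (MvPolynomial σ 𝕂) (X (v 0)) :=
      IsLeftRegular.isSMulRegular (isRegular_of_ne_zero (X_ne_zero (v 0))).left
    have hne : ∀ m : Fin n, v m.succ ≠ v 0 := fun m h => Fin.succ_ne_zero m (hv h)
    refine quotCons (killOne (v 0)).toRingHom (killOne_surjective _) _ (killOne_ker _) hreg _ ?_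
    have hmap : List.map (killOne (𝕂 := 𝕂) (v 0)).toRingHom
          (List.ofFn fun m : Fin n => (X (v m.succ) : MvPolynomial σ 𝕂))
        = List.ofFn fun m : Fin n =>
            (X (⟨v m.succ, hne m⟩ : {j : σ // j ≠ v 0}) : MvPolynomial _ 𝕂) := by
      rw [List.map_ofFn]
      congr 1
      funext m
      exact killOne_X_ne (hne m)
    rw [hmap]
    exact varReg 𝕂 n {j : σ // j ≠ v 0} (fun m => (⟨v m.succ, hne m⟩ : {j : σ // j ≠ v 0}))
      (fun m m' h => Fin.succ_injective _ (hv (congrArg Subtype.val h)))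

section auto
variable {𝕂 : Type} [Field 𝕂] {ι : Type} [Fintype ι] [DecidableEq ι]

lemma linAuto_aux (M N : Matrix ι ι 𝕂) (hNM : N * M = 1) :
    (aeval fun i => ∑ j, C (M i j) * X j : MvPolynomial ι 𝕂 →ₐ[𝕂] MvPolynomial ι 𝕂).comp
      (aeval fun i => ∑ j, C (N i j) * X j) = AlgHom.id 𝕂 _ := by
  apply MvPolynomial.algHom_ext
  intro i
  simp only [AlgHom.comp_apply, aeval_X, map_sum, map_mul, aeval_C, algebraMap_eq,
    AlgHom.id_apply]
  simp_rw [Finset.mul_sum, ← mul_assoc, ← C_mul]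
  rw [Finset.sum_comm]
  simp_rw [← Finset.sum_mul, ← map_sum, ← Matrix.mul_apply, hNM, Matrix.one_apply]
  simp only [apply_ite C, C_1, C_0, ite_mul, one_mul, zero_mul]
  simp [Finset.sum_ite_eq]

noncomputable def linAuto (M N : Matrix ι ι 𝕂) (hMN : M * N = 1) (hNM : N * M = 1) :
    MvPolynomial ι 𝕂 ≃ₐ[𝕂] MvPolynomial ι 𝕂 :=
  AlgEquiv.ofAlgHom (aeval fun i => ∑ j, C (M i j) * X j) (aeval fun i => ∑ j, C (N i j) * X j)
    (linAuto_aux M N hNM) (linAuto_aux N M hMN)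

lemma linAuto_X (M N : Matrix ι ι 𝕂) (hMN : M * N = 1) (hNM : N * M = 1) (i : ι) :
    linAuto M N hMN hNM (X i) = ∑ j, C (M i j) * X j := by
  simp [linAuto]

end auto

section flat
variable {𝕂 : Type} [Field 𝕂] {ι : Type} [Fintype ι] [DecidableEq ι]

noncomputable def ind (k : ι → ℕ) (i : ι) : (Σ i, Fin (k i)) →₀ ℕ :=
  ∑ j : Fin (k i), Finsupp.single ⟨i, j⟩ 1

lemma ind_apply (k : ι → ℕ) (i i' : ι) (j' : Fin (k i')) :
    ind k i ⟨i', j'⟩ = if i' = i then 1 else 0 := by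
  rw [ind, Finsupp.finset_sum_apply]
  rcases eq_or_ne i' i with rfl | h
  · rw [if_pos rfl]
    simp [Finsupp.single_apply, Sigma.mk.inj_iff]
  · rw [if_neg h]
    apply Finset.sum_eq_zero
    intro j _
    rw [Finsupp.single_apply, if_neg]
    intro hc
    exact h (congrArg Sigma.fst hc).symm

noncomputable def blk (k : ι → ℕ) (q : ι →₀ ℕ) : (Σ i, Fin (k i)) →₀ ℕ :=
  ∑ i : ι, q i • ind k i

lemma blk_apply (k : ι → ℕ) (q : ι →₀ ℕ) (i : ι) (j : Fin (k i)) :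
    blk k q ⟨i, j⟩ = q i := by
  rw [blk, Finsupp.finset_sum_apply]
  simp only [Finsupp.smul_apply, ind_apply, smul_eq_mul, mul_ite, mul_one, mul_zero]
  simp [Finset.sum_ite_eq]

lemma prod_monomial_one {τ α : Type*} [DecidableEq τ] (s : Finset α) (d : α → (τ →₀ ℕ)) :
    ∏ j ∈ s, (monomial (d j) (1 : 𝕂)) = monomial (∑ j ∈ s, d j) 1 := by
  classical
  induction s using Finset.induction_on with
  | empty => simp
  | insert _ _ hnotmem ih =>
    rw [Finset.prod_insert hnotmem, Finset.sum_insert hnotmem, ih, monomial_mul, mul_one]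

lemma X_as_monomial {τ : Type*} (s : τ) :
    (X s : MvPolynomial τ 𝕂) = monomial (Finsupp.single s 1) 1 := by
  rw [← pow_one (X s), X_pow_eq_monomial]

lemma Phi_monomial (k : ι → ℕ) (q : ι →₀ ℕ) :
    aeval (fun i => ∏ j : Fin (k i), (X ⟨i, j⟩ : MvPolynomial (Σ i, Fin (k i)) 𝕂))
      (monomial q (1 : 𝕂)) = monomial (blk k q) 1 := by
  have h1 : ∀ i : ι, (∏ j : Fin (k i), (X ⟨i, j⟩ : MvPolynomial (Σ i, Fin (k i)) 𝕂))
      = monomial (ind k i) 1 := by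
    intro i
    rw [ind]
    calc (∏ j : Fin (k i), (X ⟨i, j⟩ : MvPolynomial (Σ i, Fin (k i)) 𝕂))
        = ∏ j : Fin (k i), monomial (Finsupp.single (⟨i, j⟩ : Σ i, Fin (k i)) 1) 1 := by
          simp_rw [X_as_monomial]
      _ = _ := prod_monomial_one _ _
  rw [aeval_monomial, map_one, one_mul]
  simp_rw [h1]
  have h2 : ∀ (i : ι) (e : ℕ),
      (monomial (ind k i) (1:𝕂)) ^ e = monomial (e • ind k i) 1 := by
    intro i e
    rw [monomial_pow, one_pow]
  calc (q.prod fun i e => (monomial (ind k i) (1:𝕂)) ^ e)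
      = ∏ i ∈ q.support, monomial (q i • ind k i) (1:𝕂) := by
        rw [Finsupp.prod]; exact Finset.prod_congr rfl fun i _ => h2 i (q i)
    _ = monomial (∑ i ∈ q.support, q i • ind k i) 1 := prod_monomial_one _ _
    _ = monomial (blk k q) 1 := by
        have he : (∑ i ∈ q.support, q i • ind k i) = blk k q := by
          rw [blk]
          apply Finset.sum_subset (Finset.subset_univ _)
          intro i _ hi
          rw [Finsupp.notMem_support_iff.mp hi, zero_smul]
        rw [he]

/-- exponent vectors with a zero in each block -/
def Bset (k : ι → ℕ) : Type := {d : (Σ i, Fin (k i)) →₀ ℕ // ∀ i, ∃ j : Fin (k i), d ⟨i, j⟩ = 0}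

noncomputable def expEquiv (k : ι → ℕ) (hk : ∀ i, 1 ≤ k i) :
    (Σ _ : Bset k, (ι →₀ ℕ)) ≃ ((Σ i, Fin (k i)) →₀ ℕ) where
  toFun p := p.1.1 + blk k p.2
  invFun e :=
    have hne : ∀ i, (Finset.univ : Finset (Fin (k i))).Nonempty :=
      fun i => ⟨⟨0, hk i⟩, Finset.mem_univ _⟩
    let m : ι →₀ ℕ := Finsupp.equivFunOnFinite.symm
      (fun i => (Finset.univ).inf' (hne i) fun j => e ⟨i, j⟩)
    ⟨⟨Finsupp.equivFunOnFinite.symm (fun s => e s - m s.1), by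
        intro i
        obtain ⟨j, -, hj⟩ := Finset.exists_mem_eq_inf' (hne i) (fun j => e ⟨i, j⟩)
        exact ⟨j, by simp [m, hj.symm]⟩⟩, m⟩
  left_inv := by
    rintro ⟨⟨d, hd⟩, q⟩
    have hne : ∀ i, (Finset.univ : Finset (Fin (k i))).Nonempty :=
      fun i => ⟨⟨0, hk i⟩, Finset.mem_univ _⟩
    have hmin : ∀ i, (Finset.univ).inf' (hne i) (fun j => d ⟨i, j⟩ + blk k q ⟨i, j⟩) = q i := by
      intro i
      apply le_antisymm
      · obtain ⟨j0, hj0⟩ := hd i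
        refine le_trans (Finset.inf'_le _ (Finset.mem_univ j0)) ?_
        simp [hj0, blk_apply]
      · apply Finset.le_inf'
        intro j _
        simp [blk_apply]
    refine Sigma.ext ?_ ?_
    · apply Subtype.ext
      show Finsupp.equivFunOnFinite.symm _ = d
      ext ⟨i, j⟩
      simp only [Finsupp.coe_equivFunOnFinite_symm, Finsupp.add_apply]
      rw [hmin i, blk_apply]
      omega
    · apply heq_of_eq
      show Finsupp.equivFunOnFinite.symm _ = q
      ext i
      simp only [Finsupp.coe_equivFunOnFinite_symm, Finsupp.add_apply]
      exact hmin i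
  right_inv := by
    intro e
    have hne : ∀ i, (Finset.univ : Finset (Fin (k i))).Nonempty :=
      fun i => ⟨⟨0, hk i⟩, Finset.mem_univ _⟩
    ext ⟨i, j⟩
    have hle : (Finset.univ).inf' (hne i) (fun j => e ⟨i, j⟩) ≤ e ⟨i, j⟩ :=
      Finset.inf'_le _ (Finset.mem_univ j)
    simp only [Finsupp.add_apply, blk_apply]
    simp only [Finsupp.coe_equivFunOnFinite_symm]
    omega

lemma flat_transfer (k : ι → ℕ) (hk : ∀ i, 1 ≤ k i) (rs : List (MvPolynomial ι 𝕂))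
    (h : RingTheory.Sequence.IsWeaklyRegular (MvPolynomial ι 𝕂) rs) :
    RingTheory.Sequence.IsWeaklyRegular (MvPolynomial (Σ i, Fin (k i)) 𝕂)
      (rs.map (aeval fun i => ∏ j : Fin (k i), (X ⟨i, j⟩ : MvPolynomial (Σ i, Fin (k i)) 𝕂))) := by
  let R := MvPolynomial ι 𝕂
  let S := MvPolynomial (Σ i, Fin (k i)) 𝕂
  let Φ : R →ₐ[𝕂] S := aeval fun i => ∏ j : Fin (k i), X ⟨i, j⟩
  letI : Algebra R S := Φ.toRingHom.toAlgebra
  haveI : IsScalarTower R S S := IsScalarTower.right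
  let L : (Bset k →₀ R) →ₗ[R] S :=
    Finsupp.lsum ℕ fun b => LinearMap.toSpanSingleton R S (monomial b.1 1)
  let b1 : Module.Basis (Σ _ : Bset k, (ι →₀ ℕ)) 𝕂 (Bset k →₀ R) :=
    Finsupp.basis fun _ => basisMonomials ι 𝕂
  let bS := basisMonomials (Σ i, Fin (k i)) 𝕂
  have key : ∀ p : Σ _ : Bset k, (ι →₀ ℕ), (L.restrictScalars 𝕂) (b1 p) = bS (expEquiv k hk p) := by
    rintro ⟨b, q⟩
    have hb1 : b1 ⟨b, q⟩ = Finsupp.single b (monomial q 1) := by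
      rw [show b1 ⟨b, q⟩ = Finsupp.single b ((basisMonomials ι 𝕂) q) from
        congrFun (Finsupp.coe_basis _) _]
      rw [coe_basisMonomials]
    rw [LinearMap.restrictScalars_apply, hb1]
    rw [show L (Finsupp.single b (monomial q 1)) =
      (monomial q (1:𝕂)) • (monomial b.1 (1:𝕂) : S) from Finsupp.lsum_single _ _ _ _]
    rw [Algebra.smul_def, RingHom.algebraMap_toAlgebra]
    show Φ (monomial q 1) * monomial b.1 1 = bS (expEquiv k hk ⟨b, q⟩)
    rw [Phi_monomial, monomial_mul, one_mul]
    rw [show bS (expEquiv k hk ⟨b, q⟩) = monomial (expEquiv k hk ⟨b, q⟩) 1 from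
      congrFun (coe_basisMonomials _ _) _]
    rw [show (expEquiv k hk ⟨b, q⟩ : (Σ i, Fin (k i)) →₀ ℕ) = b.1 + blk k q from rfl]
    rw [add_comm]
  have heqmap : L.restrictScalars 𝕂 = (b1.equiv bS (expEquiv k hk)).toLinearMap :=
    b1.ext fun p => (key p).trans (by simp [Module.Basis.equiv_apply])
  have hbij : Function.Bijective L := by
    have : ⇑L = ⇑(L.restrictScalars 𝕂) := rfl
    rw [this, heqmap]
    exact (b1.equiv bS (expEquiv k hk)).bijective
  haveI : Module.Free R S := Module.Free.of_equiv (LinearEquiv.ofBijective L hbij)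
  haveI : Module.Flat R S := inferInstance
  have h2 : RingTheory.Sequence.IsWeaklyRegular (TensorProduct R S R) rs :=
    h.isWeaklyRegular_lTensor (M₂ := S)
  have h3 : RingTheory.Sequence.IsWeaklyRegular S rs :=
    ((TensorProduct.rid R S).isWeaklyRegular_congr rs).mp h2
  have h4 := (RingTheory.Sequence.isWeaklyRegular_map_algebraMap_iff
    (R := R) (S := S) (M := S) rs).mpr h3
  have : ⇑(algebraMap R S) = ⇑Φ := rfl
  rwa [this] at h4

end flat

/-- In `S = 𝕂[x_ij : 1 ≤ i ≤ n, 1 ≤ j ≤ kᵢ]` with `n ≥ 2` and all `kᵢ ≥ 1`, the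
polynomials `f_m = Σ_l a_ml · X_l` (where `X_i = x_i1 ⋯ x_ikᵢ`), `1 ≤ m ≤ n−1`,
form a regular sequence, provided all maximal minors of the `(n−1) × n`
coefficient matrix `(a_ml)` are nonzero.  Here we write `n = n₀ + 1`, so that
there are `n₀ = n − 1` forms in `n₀ + 1 ≥ 2` blocks of variables. -/
theorem stmt_15 {𝕂 : Type} [Field 𝕂] (n₀ : ℕ) (hn : 1 ≤ n₀)
    (k : Fin (n₀ + 1) → ℕ) (hk : ∀ i, 1 ≤ k i)
    (a : Fin n₀ → Fin (n₀ + 1) → 𝕂)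
    (hminors : ∀ j : Fin (n₀ + 1),
      (Matrix.of fun m i : Fin n₀ => a m (j.succAbove i)).det ≠ 0)
    (f : Fin n₀ → MvPolynomial (Σ i : Fin (n₀ + 1), Fin (k i)) 𝕂)
    (hf : ∀ m, f m = ∑ l : Fin (n₀ + 1),
      MvPolynomial.C (a m l) * ∏ j : Fin (k l), MvPolynomial.X ⟨l, j⟩) :
    RingTheory.Sequence.IsRegular (MvPolynomial (Σ i : Fin (n₀ + 1), Fin (k i)) 𝕂)
      (List.ofFn f) := by
  classical
  -- the coefficient matrix extended by a unit last row
  set b : Fin (n₀ + 1) → Fin (n₀ + 1) → 𝕂 := fun m =>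
    Fin.lastCases (fun l => if l = Fin.last n₀ then (1 : 𝕂) else 0) a m with hb
  have hb_cast : ∀ (m : Fin n₀) (l : Fin (n₀ + 1)), b (Fin.castSucc m) l = a m l := by
    intro m l
    simp only [hb, Fin.lastCases_castSucc]
  have hb_last : ∀ l : Fin (n₀ + 1), b (Fin.last n₀) l = if l = Fin.last n₀ then 1 else 0 := by
    intro l
    simp only [hb, Fin.lastCases_last]
  have hdet : (Matrix.of b).det ≠ 0 := by
    rw [Matrix.det_succ_row _ (Fin.last n₀), Finset.sum_eq_single (Fin.last n₀)]
    · have hsub : (Matrix.of b).submatrix (Fin.last n₀).succAbove (Fin.last n₀).succAbove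
          = Matrix.of fun m i : Fin n₀ => a m ((Fin.last n₀).succAbove i) := by
        ext m i
        simp only [Matrix.submatrix_apply, Matrix.of_apply]
        rw [Fin.succAbove_last_apply m, hb_cast]
      rw [hsub]
      simp only [Matrix.of_apply, hb_last, if_pos rfl, mul_one]
      intro hc
      rcases mul_eq_zero.mp hc with hc | hc
      · have heven : ((-1 : 𝕂)) ^ ((Fin.last n₀ : ℕ) + (Fin.last n₀ : ℕ)) = 1 := by
          rw [← two_mul, pow_mul]
          norm_num
        rw [heven] at hc
        norm_num at hc
      · exact hminors (Fin.last n₀) hc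
    · intro j _ hj
      simp only [Matrix.of_apply, hb_last, if_neg hj, mul_zero, zero_mul]
    · intro h
      exact absurd (Finset.mem_univ _) h
  have hIsUnit : IsUnit (Matrix.of b).det := isUnit_iff_ne_zero.mpr hdet
  set M := Matrix.of b with hM
  set N := M⁻¹ with hN
  have hMN : M * N = 1 := Matrix.mul_nonsing_inv _ hIsUnit
  have hNM : N * M = 1 := Matrix.nonsing_inv_mul _ hIsUnit
  set ψ := linAuto M N hMN hNM with hψ
  set g : Fin n₀ → MvPolynomial (Fin (n₀ + 1)) 𝕂 := fun m => ∑ l, C (a m l) * X l with hg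
  have hglist : (List.ofFn fun m : Fin n₀ => (X (Fin.castSucc m) : MvPolynomial (Fin (n₀ + 1)) 𝕂)).map
      ⇑ψ.toRingEquiv = List.ofFn g := by
    rw [List.map_ofFn]
    congr 1
    funext m
    show ψ (X (Fin.castSucc m)) = g m
    rw [hψ, linAuto_X, hg]
    apply Finset.sum_congr rfl
    intro l _
    rw [hM]
    rw [Matrix.of_apply, hb_cast]
  have hgreg : IsWeaklyRegular (MvPolynomial (Fin (n₀ + 1)) 𝕂) (List.ofFn g) := by
    rw [← hglist]
    exact (ringEquiv_isWeaklyRegular ψ.toRingEquiv _).mp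
      (varReg 𝕂 n₀ (Fin (n₀ + 1)) Fin.castSucc (Fin.castSucc_injective n₀))
  have htransfer := flat_transfer k hk (List.ofFn g) hgreg
  have hlist : (List.ofFn g).map
      (aeval fun i => ∏ j : Fin (k i), (X ⟨i, j⟩ : MvPolynomial (Σ i : Fin (n₀ + 1), Fin (k i)) 𝕂))
      = List.ofFn f := by
    rw [List.map_ofFn]
    congr 1
    funext m
    show aeval _ (g m) = f m
    rw [hg, hf m, map_sum]
    apply Finset.sum_congr rfl
    intro l _
    rw [map_mul, aeval_X, aeval_C, algebraMap_eq]
  rw [hlist] at htransfer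
  refine ⟨htransfer, ?_⟩
  have hsm : Ideal.ofList (List.ofFn f) • (⊤ : Submodule (MvPolynomial (Σ i : Fin (n₀ + 1), Fin (k i)) 𝕂)
      (MvPolynomial (Σ i : Fin (n₀ + 1), Fin (k i)) 𝕂)) = Ideal.ofList (List.ofFn f) := by
    rw [Ideal.smul_eq_mul, Ideal.mul_top]
  rw [hsm]
  intro htop
  have h1 : (1 : MvPolynomial (Σ i : Fin (n₀ + 1), Fin (k i)) 𝕂) ∈ Ideal.ofList (List.ofFn f) :=
    htop ▸ Submodule.mem_top
  have hker : Ideal.ofList (List.ofFn f) ≤ RingHom.ker constantCoeff := by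
    apply Ideal.span_le.mpr
    rintro p hp
    simp only [Set.mem_setOf_eq, List.mem_ofFn] at hp
    obtain ⟨m, rfl⟩ := hp
    rw [SetLike.mem_coe, RingHom.mem_ker, hf m, map_sum]
    apply Finset.sum_eq_zero
    intro l _
    rw [map_mul, map_prod]
    have hz : constantCoeff
        (X (⟨l, ⟨0, hk l⟩⟩ : Σ i : Fin (n₀ + 1), Fin (k i)) :
          MvPolynomial (Σ i : Fin (n₀ + 1), Fin (k i)) 𝕂) = 0 := by simp
    rw [Finset.prod_eq_zero (Finset.mem_univ (⟨0, hk l⟩ : Fin (k l))) hz, mul_zero]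
  have hcontr := hker h1
  rw [RingHom.mem_ker, map_one] at hcontr
  exact one_ne_zero hcontr
end var
end

section
/- Let u, v ∈ M₁×···×Mₙ be such that u and v differ in at least two coordinates, i.e., there exist i₁ < i₂ with u_{i₁} ≠ v_{i₁} and u_{i₂} ≠ v_{i₂}. Then codim_R(I_u + I_v) ≥ 3 and φ_u(I_u) ⊆ I_v. -/
open MvPolynomial

noncomputable section

section Aux

variable {𝕂 : Type} [Field 𝕂] {σ : Type} (pred : σ → Prop) [DecidablePred pred]

def killHom : MvPolynomial σ 𝕂 →+* MvPolynomial σ 𝕂 :=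
  eval₂Hom C (fun s => if pred s then 0 else X s)

@[simp] lemma killHom_X (s : σ) :
    killHom pred (X s) = if pred s then 0 else (X s : MvPolynomial σ 𝕂) := by
  simp [killHom]

lemma sub_killHom_mem (g : MvPolynomial σ 𝕂) :
    g - killHom pred g ∈ Ideal.span (X '' {s | pred s} : Set (MvPolynomial σ 𝕂)) := by
  induction g using MvPolynomial.induction_on with
  | C a => simp [killHom]
  | add p q hp hq =>
      have := Ideal.add_mem _ hp hq
      convert this using 1
      rw [map_add]
      ring
  | mul_X p s hp =>
      rw [map_mul, killHom_X]
      by_cases h : pred s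
      · rw [if_pos h, mul_zero, sub_zero]
        exact Ideal.mul_mem_left _ p (Ideal.subset_span ⟨s, h, rfl⟩)
      · rw [if_neg h, ← sub_mul]
        exact Ideal.mul_mem_right _ _ hp

lemma span_X_eq_ker_killHom :
    Ideal.span (X '' {s | pred s} : Set (MvPolynomial σ 𝕂)) =
      RingHom.ker (killHom (𝕂 := 𝕂) pred) := by
  apply le_antisymm
  · rw [Ideal.span_le]
    rintro _ ⟨s, hs, rfl⟩
    simp [RingHom.mem_ker]
    exact hs
  · intro g hg
    have := sub_killHom_mem pred g
    rwa [RingHom.mem_ker.mp hg, sub_zero] at this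

lemma span_X_isPrime :
    (Ideal.span (X '' {s | pred s} : Set (MvPolynomial σ 𝕂))).IsPrime := by
  rw [span_X_eq_ker_killHom]
  exact RingHom.ker_isPrime _

lemma map_lt_map_of_surjective {S R : Type} [CommRing S] [CommRing R] (f : S →+* R)
    (hf : Function.Surjective f) {p q : Ideal S} (hker : RingHom.ker f ≤ p) (hpq : p < q) :
    Ideal.map f p < Ideal.map f q := by
  refine lt_of_le_of_ne (Ideal.map_mono hpq.le) fun h => ?_
  have h2 := congrArg (Ideal.comap f) h
  rw [Ideal.comap_map_of_surjective f hf, Ideal.comap_map_of_surjective f hf,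
    ← RingHom.ker_eq_comap_bot, sup_eq_left.mpr hker,
    sup_eq_left.mpr (le_trans hker hpq.le)] at h2
  exact hpq.ne h2

end Aux

section Chain

variable {𝕂 : Type} [Field 𝕂]

lemma exists_chain (n₀ : ℕ) (k : Fin (n₀ + 1) → ℕ)
    (a : Fin n₀ → Fin (n₀ + 1) → 𝕂)
    (hminors : ∀ j : Fin (n₀ + 1),
      (Matrix.of fun m i : Fin n₀ => a m (j.succAbove i)).det ≠ 0)
    (f : Fin n₀ → MvPolynomial (Σ i : Fin (n₀ + 1), Fin (k i)) 𝕂)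
    (hf : ∀ m, f m = ∑ l : Fin (n₀ + 1),
      MvPolynomial.C (a m l) * ∏ j : Fin (k l), MvPolynomial.X ⟨l, j⟩)
    (u : ∀ i : Fin (n₀ + 1), Fin (k i)) (i₁ i₂ : Fin (n₀ + 1)) (h12 : i₁ ≠ i₂)
    (w₁ : Fin (k i₁)) (w₂ : Fin (k i₂)) (hw₁ : u i₁ ≠ w₁) (hw₂ : u i₂ ≠ w₂) :
    ∃ p0 p1 p2 : Ideal (MvPolynomial (Σ i : Fin (n₀ + 1), Fin (k i)) 𝕂),
      p0.IsPrime ∧ p1.IsPrime ∧ p2.IsPrime ∧ (∀ m, f m ∈ p0) ∧ p0 < p1 ∧ p1 < p2 ∧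
      p2 ≤ Ideal.span ((Set.range fun i : Fin (n₀ + 1) =>
          (X ⟨i, u i⟩ : MvPolynomial (Σ i, Fin (k i)) 𝕂)) ∪ {X ⟨i₁, w₁⟩}) ∧
      (X ⟨i₂, w₂⟩ : MvPolynomial (Σ i, Fin (k i)) 𝕂) ∉ p2 := by
  classical
  -- the two monomial primes
  set pred0 : (Σ i : Fin (n₀ + 1), Fin (k i)) → Prop := fun s => s.2 = u s.1 with hpred0
  set pred1 : (Σ i : Fin (n₀ + 1), Fin (k i)) → Prop :=
    fun s => s.2 = u s.1 ∨ s = ⟨i₁, w₁⟩ with hpred1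
  set p1 : Ideal (MvPolynomial (Σ i : Fin (n₀ + 1), Fin (k i)) 𝕂) :=
    Ideal.span (X '' {s | pred0 s}) with hp1
  set p2 : Ideal (MvPolynomial (Σ i : Fin (n₀ + 1), Fin (k i)) 𝕂) :=
    Ideal.span (X '' {s | pred1 s}) with hp2
  -- the parametrization map ψ into a localization
  set B : Fin (n₀ + 1) → MvPolynomial (Option (Σ i : Fin (n₀ + 1), Fin (k i))) 𝕂 :=
    fun l => ∏ j ∈ Finset.univ.erase (u l), X (some ⟨l, j⟩) with hB
  set b : MvPolynomial (Option (Σ i : Fin (n₀ + 1), Fin (k i))) 𝕂 := ∏ l, B l with hb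
  have hBne : ∀ l, B l ≠ 0 := fun l =>
    Finset.prod_ne_zero_iff.mpr fun j _ => X_ne_zero _
  have hbne : b ≠ 0 := Finset.prod_ne_zero_iff.mpr fun l _ => hBne l
  set M := Submonoid.powers b with hM
  have hMle : M ≤ nonZeroDivisors (MvPolynomial (Option (Σ i : Fin (n₀ + 1), Fin (k i))) 𝕂) :=
    powers_le_nonZeroDivisors_of_noZeroDivisors hbne
  haveI : IsDomain (Localization M) := IsLocalization.isDomain_of_le_nonZeroDivisors _ hMle
  set c : Fin (n₀ + 1) → 𝕂 := fun l =>
    (-1 : 𝕂) ^ (l : ℕ) * (Matrix.of fun m r : Fin n₀ => a m (l.succAbove r)).det with hc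
  have hcne : ∀ l, c l ≠ 0 := fun l =>
    mul_ne_zero (pow_ne_zero _ (neg_ne_zero.mpr one_ne_zero)) (hminors l)
  have hLap : ∀ m, ∑ l, a m l * c l = 0 := by
    intro m
    have hdet : (Matrix.of (Fin.cons (a m) a)).det = 0 :=
      Matrix.det_zero_of_row_eq (Fin.succ_ne_zero m).symm
        (by funext l; simp)
    rw [Matrix.det_succ_row_zero] at hdet
    rw [← hdet]
    apply Finset.sum_congr rfl
    intro j _
    have hsub : (Matrix.of (Fin.cons (a m) a)).submatrix Fin.succ j.succAbove
        = Matrix.of fun m' r : Fin n₀ => a m' (j.succAbove r) := by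
      ext i r
      simp
    rw [hsub]
    simp only [hc, Matrix.of_apply, Fin.cons_zero]
    ring
  set num : Fin (n₀ + 1) → MvPolynomial (Option (Σ i : Fin (n₀ + 1), Fin (k i))) 𝕂 := fun l =>
    C (c l) * X none * ∏ l' ∈ Finset.univ.erase l, B l' with hnum
  have hnumne : ∀ l, num l ≠ 0 := by
    intro l
    simp only [hnum]
    exact mul_ne_zero (mul_ne_zero (C_ne_zero.mpr (hcne l)) (X_ne_zero _))
      (Finset.prod_ne_zero_iff.mpr fun l' _ => hBne l')
  set ψv : (Σ i : Fin (n₀ + 1), Fin (k i)) → Localization M := fun s =>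
    if s.2 = u s.1 then Localization.mk (num s.1) ⟨b, Submonoid.mem_powers b⟩
    else algebraMap (MvPolynomial (Option (Σ i : Fin (n₀ + 1), Fin (k i))) 𝕂) (Localization M) (X (some s)) with hψv
  set ψ : MvPolynomial (Σ i : Fin (n₀ + 1), Fin (k i)) 𝕂 →+* Localization M :=
    eval₂Hom ((algebraMap (MvPolynomial (Option (Σ i : Fin (n₀ + 1), Fin (k i))) 𝕂) (Localization M)).comp C) ψv with hψ
  have hψC : ∀ x : 𝕂, ψ (C x) = algebraMap (MvPolynomial (Option (Σ i : Fin (n₀ + 1), Fin (k i))) 𝕂) (Localization M) (C x) := fun x => by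
    simp [hψ]
  have hψX : ∀ s : (Σ i : Fin (n₀ + 1), Fin (k i)), ψ (X s) = ψv s := fun s => by simp [hψ]
  have hψprod : ∀ l : Fin (n₀ + 1),
      ψ (∏ j : Fin (k l), X ⟨l, j⟩) = algebraMap (MvPolynomial (Option (Σ i : Fin (n₀ + 1), Fin (k i))) 𝕂) (Localization M) (C (c l) * X none) := by
    intro l
    rw [map_prod]
    rw [← Finset.mul_prod_erase _ _ (Finset.mem_univ (u l))]
    have h1 : ψ (X (⟨l, u l⟩ : Σ i : Fin (n₀ + 1), Fin (k i)))
        = Localization.mk (num l) ⟨b, Submonoid.mem_powers b⟩ := by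
      rw [hψX]; simp [hψv]
    have h2 : ∀ j ∈ Finset.univ.erase (u l),
        ψ (X (⟨l, j⟩ : Σ i : Fin (n₀ + 1), Fin (k i)))
          = algebraMap (MvPolynomial (Option (Σ i : Fin (n₀ + 1), Fin (k i))) 𝕂) (Localization M) (X (some ⟨l, j⟩)) := by
      intro j hj
      rw [hψX]
      simp only [hψv]
      rw [if_neg (Finset.ne_of_mem_erase hj)]
    rw [h1, Finset.prod_congr rfl h2, ← map_prod]
    show _ * algebraMap (MvPolynomial (Option (Σ i : Fin (n₀ + 1), Fin (k i))) 𝕂) (Localization M) (B l) = _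
    rw [← Localization.mk_one_eq_algebraMap, Localization.mk_mul, mul_one]
    have hnb : num l * B l = (C (c l) * X none) * b := by
      simp only [hnum, hb]
      rw [mul_assoc, Finset.prod_erase_mul _ _ (Finset.mem_univ l)]
    rw [hnb]
    rw [show Localization.mk ((C (c l) * X none) * b) (⟨b, Submonoid.mem_powers b⟩ : M)
        = Localization.mk (C (c l) * X none) 1 *
            Localization.mk b ⟨b, Submonoid.mem_powers b⟩ by
      rw [Localization.mk_mul, one_mul]]
    rw [show Localization.mk b (⟨b, Submonoid.mem_powers b⟩ : M) = 1 from
      Localization.mk_self ⟨b, Submonoid.mem_powers b⟩]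
    rw [mul_one, Localization.mk_one_eq_algebraMap]
  have hψf : ∀ m, ψ (f m) = 0 := by
    intro m
    rw [hf m, map_sum]
    have : ∀ l ∈ Finset.univ, ψ (C (a m l) * ∏ j : Fin (k l),
          X (⟨l, j⟩ : Σ i : Fin (n₀ + 1), Fin (k i)))
        = algebraMap (MvPolynomial (Option (Σ i : Fin (n₀ + 1), Fin (k i))) 𝕂) (Localization M) (C (a m l * c l) * X none) := by
      intro l _
      rw [map_mul, hψC, hψprod, ← map_mul]
      congr 1
      rw [map_mul C (a m l) (c l), mul_assoc]
    rw [Finset.sum_congr rfl this, ← map_sum]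
    have : (∑ l, C (a m l * c l) * X (none : Option (Σ i : Fin (n₀ + 1), Fin (k i))))
        = (C (∑ l, a m l * c l)) * X none := by
      rw [map_sum C, Finset.sum_mul]
    rw [this, hLap, map_zero, zero_mul, map_zero]
  -- evaluation at t = 0
  set ev0 : MvPolynomial (Option (Σ i : Fin (n₀ + 1), Fin (k i))) 𝕂 →+*
      MvPolynomial (Σ i : Fin (n₀ + 1), Fin (k i)) 𝕂 :=
    eval₂Hom C (fun o => Option.elim o 0 X) with hev0
  have hev0none : ev0 (X none) = 0 := by simp [hev0]
  have hev0some : ∀ s, ev0 (X (some s)) = X s := fun s => by simp [hev0]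
  have hb0ne : ev0 b ≠ 0 := by
    have : ev0 b = ∏ l, ∏ j ∈ Finset.univ.erase (u l),
        X (⟨l, j⟩ : Σ i : Fin (n₀ + 1), Fin (k i)) := by
      simp only [hb, hB, map_prod, hev0some]
    rw [this]
    exact Finset.prod_ne_zero_iff.mpr fun l _ =>
      Finset.prod_ne_zero_iff.mpr fun j _ => X_ne_zero _
  have hunits : ∀ y : M, IsUnit (((algebraMap (MvPolynomial (Σ i : Fin (n₀ + 1), Fin (k i)) 𝕂)
      (Localization (Submonoid.powers (ev0 b)))).comp ev0) y) := by
    rintro ⟨y, n, rfl⟩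
    simp only [RingHom.comp_apply, map_pow]
    exact IsUnit.pow _ (IsLocalization.map_units _ ⟨ev0 b, Submonoid.mem_powers _⟩)
  set ρ : Localization M →+* Localization (Submonoid.powers (ev0 b)) :=
    IsLocalization.lift hunits with hρ
  have hχ : ρ.comp ψ = (algebraMap (MvPolynomial (Σ i : Fin (n₀ + 1), Fin (k i)) 𝕂)
      (Localization (Submonoid.powers (ev0 b)))).comp (killHom pred0) := by
    apply MvPolynomial.ringHom_ext
    · intro x
      simp only [RingHom.comp_apply]
      rw [hψC, hρ, IsLocalization.lift_eq]
      simp only [RingHom.comp_apply]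
      rw [show ev0 (C x) = C x by simp [hev0], show killHom pred0 (C x) = C x by simp [killHom]]
    · intro s
      simp only [RingHom.comp_apply]
      rw [hψX, killHom_X]
      simp only [hψv, hpred0]
      by_cases h : s.2 = u s.1
      · rw [if_pos h, if_pos h, map_zero]
        rw [Localization.mk_eq_mk'_apply, hρ, IsLocalization.lift_mk']
        have h0 : ev0 (num s.1) = 0 := by
          simp only [hnum, map_mul, hev0none, mul_zero, zero_mul]
        simp only [RingHom.comp_apply, h0, map_zero, zero_mul]
      · rw [if_neg h, if_neg h, hρ, IsLocalization.lift_eq]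
        simp only [RingHom.comp_apply, hev0some]
  have hkerψ : RingHom.ker ψ ≤ p1 := by
    intro g hg
    have hg2 : ρ (ψ g) = algebraMap (MvPolynomial (Σ i : Fin (n₀ + 1), Fin (k i)) 𝕂)
        (Localization (Submonoid.powers (ev0 b))) (killHom pred0 g) :=
      congrFun (congrArg (fun h : _ →+* _ => ⇑h) hχ) g
    rw [RingHom.mem_ker.mp hg, map_zero] at hg2
    have hinj := IsLocalization.injective (Localization (Submonoid.powers (ev0 b)))
      (powers_le_nonZeroDivisors_of_noZeroDivisors hb0ne)
    have h0 : killHom pred0 g = 0 := hinj (by rw [map_zero]; exact hg2.symm)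
    have := sub_killHom_mem pred0 g
    rwa [h0, sub_zero] at this
  -- assembling the chain
  haveI hprime1 : p1.IsPrime := span_X_isPrime pred0
  haveI hprime2 : p2.IsPrime := span_X_isPrime pred1
  refine ⟨RingHom.ker ψ, p1, p2, RingHom.ker_isPrime ψ, hprime1, hprime2,
    fun m => RingHom.mem_ker.mpr (hψf m), ?_, ?_, ?_, ?_⟩
  · refine lt_of_le_of_ne hkerψ fun h => ?_
    have hmem : (X (⟨i₁, u i₁⟩ : Σ i : Fin (n₀ + 1), Fin (k i)) :
        MvPolynomial (Σ i : Fin (n₀ + 1), Fin (k i)) 𝕂) ∈ p1 :=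
      Ideal.subset_span ⟨⟨i₁, u i₁⟩, rfl, rfl⟩
    rw [← h, RingHom.mem_ker, hψX] at hmem
    simp only [hψv] at hmem
    rw [if_pos trivial, Localization.mk_eq_mk'_apply] at hmem
    have hspec := IsLocalization.mk'_spec (Localization M) (num i₁)
      (⟨b, Submonoid.mem_powers b⟩ : M)
    rw [hmem, zero_mul] at hspec
    exact hnumne i₁ (IsLocalization.injective (Localization M) hMle
      (by rw [map_zero]; exact hspec.symm))
  · refine lt_of_le_of_ne (Ideal.span_mono (Set.image_mono fun s hs => Or.inl hs)) fun h => ?_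
    have hmem : (X (⟨i₁, w₁⟩ : Σ i : Fin (n₀ + 1), Fin (k i)) :
        MvPolynomial (Σ i : Fin (n₀ + 1), Fin (k i)) 𝕂) ∈ p2 :=
      Ideal.subset_span ⟨⟨i₁, w₁⟩, Or.inr rfl, rfl⟩
    rw [← h, hp1, span_X_eq_ker_killHom, RingHom.mem_ker, killHom_X] at hmem
    rw [if_neg (fun hc' : w₁ = u i₁ => hw₁ hc'.symm)] at hmem
    exact X_ne_zero _ hmem
  · rw [hp2, Ideal.span_le]
    rintro _ ⟨s, hs, rfl⟩
    rcases hs with hs | hs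
    · apply Ideal.subset_span
      left
      obtain ⟨i, j⟩ := s
      dsimp only [hpred0] at hs
      subst hs
      exact ⟨i, rfl⟩
    · exact Ideal.subset_span (Or.inr (by rw [hs]; rfl))
  · rw [hp2, span_X_eq_ker_killHom, RingHom.mem_ker, killHom_X]
    rw [if_neg]
    · exact X_ne_zero _
    · rintro (hc' | hc')
      · exact hw₂ hc'.symm
      · exact h12 (congrArg Sigma.fst hc').symm

end Chain

/-- Lemma 3.2: in `R = S/(f₁, …, f_{n−1})`, if `u, v ∈ M₁ × ⋯ × Mₙ` differ in at
least two coordinates, then `codim_R (I_u + I_v) ≥ 3` and `φ_u(I_u) ⊆ I_v`,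
where `φ_u(uᵢ) = Δᵢ · ∏_{a ≠ i} (X_a / u_a)`. -/
theorem stmt_16 {𝕂 : Type} [Field 𝕂] (n₀ : ℕ) (hn : 1 ≤ n₀)
    (k : Fin (n₀ + 1) → ℕ) (hk : ∀ i, 1 ≤ k i)
    (a : Fin n₀ → Fin (n₀ + 1) → 𝕂)
    (hminors : ∀ j : Fin (n₀ + 1),
      (Matrix.of fun m i : Fin n₀ => a m (j.succAbove i)).det ≠ 0)
    (f : Fin n₀ → MvPolynomial (Σ i : Fin (n₀ + 1), Fin (k i)) 𝕂)
    (hf : ∀ m, f m = ∑ l : Fin (n₀ + 1),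
      MvPolynomial.C (a m l) * ∏ j : Fin (k l), MvPolynomial.X ⟨l, j⟩)
    (J : Ideal (MvPolynomial (Σ i : Fin (n₀ + 1), Fin (k i)) 𝕂))
    (hJ : J = Ideal.span (Set.range f))
    (u v : ∀ i : Fin (n₀ + 1), Fin (k i))
    (huv : ∃ i₁ i₂ : Fin (n₀ + 1), i₁ ≠ i₂ ∧ u i₁ ≠ v i₁ ∧ u i₂ ≠ v i₂)
    (Iu Iv : Ideal (MvPolynomial (Σ i : Fin (n₀ + 1), Fin (k i)) 𝕂 ⧸ J))
    (hIu : Iu = Ideal.span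
      (Set.range fun i : Fin (n₀ + 1) => Ideal.Quotient.mk J (MvPolynomial.X ⟨i, u i⟩)))
    (hIv : Iv = Ideal.span
      (Set.range fun i : Fin (n₀ + 1) => Ideal.Quotient.mk J (MvPolynomial.X ⟨i, v i⟩))) :
    3 ≤ idealHeight (Iu ⊔ Iv) ∧
    ∀ i : Fin (n₀ + 1),
      Ideal.Quotient.mk J
        (MvPolynomial.C ((-1 : 𝕂) ^ (i : ℕ) *
            (Matrix.of fun m l : Fin n₀ => a m (i.succAbove l)).det) *
          ∏ b ∈ Finset.univ.erase i,
            ∏ j ∈ Finset.univ.erase (u b), MvPolynomial.X (⟨b, j⟩ : Σ i', Fin (k i'))) ∈ Iv := by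
  classical
  obtain ⟨i₁, i₂, h12, hv1, hv2⟩ := huv
  constructor
  · -- height part
    obtain ⟨p0, p1, p2, hP0, hP1, hP2, hfp0, h01, h12', hp2le, hX2⟩ :=
      exists_chain n₀ k a hminors f hf u i₁ i₂ h12 (v i₁) (v i₂) hv1 hv2
    have hsurj : Function.Surjective (Ideal.Quotient.mk J) := Ideal.Quotient.mk_surjective
    have hker : RingHom.ker (Ideal.Quotient.mk J) = J := Ideal.mk_ker
    have hJ0 : J ≤ p0 := by
      rw [hJ, Ideal.span_le]
      rintro _ ⟨m, rfl⟩
      exact hfp0 m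
    have hJ1 : J ≤ p1 := hJ0.trans h01.le
    have hJ2 : J ≤ p2 := hJ1.trans h12'.le
    refine le_iInf fun P => le_iInf fun hP => ?_
    have hIuP : Iu ≤ P.asIdeal := le_trans le_sup_left hP
    have hIvP : Iv ≤ P.asIdeal := le_trans le_sup_right hP
    haveI := hP0; haveI := hP1; haveI := hP2
    have hQ0 : (Ideal.map (Ideal.Quotient.mk J) p0).IsPrime :=
      Ideal.map_isPrime_of_surjective hsurj (by rw [hker]; exact hJ0)
    have hQ1 : (Ideal.map (Ideal.Quotient.mk J) p1).IsPrime :=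
      Ideal.map_isPrime_of_surjective hsurj (by rw [hker]; exact hJ1)
    have hQ2 : (Ideal.map (Ideal.Quotient.mk J) p2).IsPrime :=
      Ideal.map_isPrime_of_surjective hsurj (by rw [hker]; exact hJ2)
    set P0 : PrimeSpectrum (MvPolynomial (Σ i : Fin (n₀ + 1), Fin (k i)) 𝕂 ⧸ J) :=
      ⟨Ideal.map (Ideal.Quotient.mk J) p0, hQ0⟩ with hP0def
    set P1 : PrimeSpectrum (MvPolynomial (Σ i : Fin (n₀ + 1), Fin (k i)) 𝕂 ⧸ J) :=
      ⟨Ideal.map (Ideal.Quotient.mk J) p1, hQ1⟩ with hP1def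
    set P2 : PrimeSpectrum (MvPolynomial (Σ i : Fin (n₀ + 1), Fin (k i)) 𝕂 ⧸ J) :=
      ⟨Ideal.map (Ideal.Quotient.mk J) p2, hQ2⟩ with hP2def
    have l01 : P0 < P1 := by
      rw [← PrimeSpectrum.asIdeal_lt_asIdeal]
      exact map_lt_map_of_surjective _ hsurj (by rw [hker]; exact hJ0) h01
    have l12 : P1 < P2 := by
      rw [← PrimeSpectrum.asIdeal_lt_asIdeal]
      exact map_lt_map_of_surjective _ hsurj (by rw [hker]; exact hJ1) h12'
    have l2P : P2 < P := by
      rw [← PrimeSpectrum.asIdeal_lt_asIdeal]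
      refine lt_of_le_of_ne ?_ ?_
      · show Ideal.map (Ideal.Quotient.mk J) p2 ≤ P.asIdeal
        rw [Ideal.map_le_iff_le_comap]
        refine hp2le.trans ?_
        rw [Ideal.span_le]
        rintro x (⟨i, rfl⟩ | hx)
        · exact hIuP (hIu ▸ Ideal.subset_span ⟨i, rfl⟩)
        · rw [Set.mem_singleton_iff] at hx
          subst hx
          exact hIvP (hIv ▸ Ideal.subset_span ⟨i₁, rfl⟩)
      · intro hEq
        have hmem : Ideal.Quotient.mk J (X ⟨i₂, v i₂⟩) ∈
            Ideal.map (Ideal.Quotient.mk J) p2 := by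
          rw [show Ideal.map (Ideal.Quotient.mk J) p2 = P.asIdeal from hEq]
          exact hIvP (hIv ▸ Ideal.subset_span ⟨i₂, rfl⟩)
        have hmem2 : (X ⟨i₂, v i₂⟩ : MvPolynomial (Σ i : Fin (n₀ + 1), Fin (k i)) 𝕂) ∈
            Ideal.comap (Ideal.Quotient.mk J) (Ideal.map (Ideal.Quotient.mk J) p2) := hmem
        rw [Ideal.comap_map_of_surjective _ hsurj, ← RingHom.ker_eq_comap_bot, hker,
          sup_eq_left.mpr hJ2] at hmem2
        exact hX2 hmem2
    let ch : LTSeries (PrimeSpectrum (MvPolynomial (Σ i : Fin (n₀ + 1), Fin (k i)) 𝕂 ⧸ J)) :=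
      ⟨3, ![P0, P1, P2, P], by
        intro i
        fin_cases i
        · exact l01
        · exact l12
        · exact l2P⟩
    have hlast : ch.last ≤ P := le_of_eq rfl
    have h3 := Order.length_le_height hlast
    exact_mod_cast h3
  · -- the map φ_u lands in I_v
    intro i
    obtain ⟨i0, hii, hdiff⟩ : ∃ i0, i0 ≠ i ∧ u i0 ≠ v i0 := by
      by_cases h : i₁ = i
      · exact ⟨i₂, fun h' => h12 (h.trans h'.symm), hv2⟩
      · exact ⟨i₁, h, hv1⟩
    have hdvd1 : (X ⟨i0, v i0⟩ : MvPolynomial (Σ i' : Fin (n₀ + 1), Fin (k i')) 𝕂) ∣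
        ∏ j ∈ Finset.univ.erase (u i0), X (⟨i0, j⟩ : Σ i', Fin (k i')) :=
      Finset.dvd_prod_of_mem _
        (Finset.mem_erase.mpr ⟨fun h => hdiff h.symm, Finset.mem_univ _⟩)
    have hdvd2 : (∏ j ∈ Finset.univ.erase (u i0),
          X (⟨i0, j⟩ : Σ i', Fin (k i')) : MvPolynomial (Σ i' : Fin (n₀ + 1), Fin (k i')) 𝕂) ∣
        ∏ b ∈ Finset.univ.erase i, ∏ j ∈ Finset.univ.erase (u b),
          X (⟨b, j⟩ : Σ i', Fin (k i')) :=
      Finset.dvd_prod_of_mem (fun b => ∏ j ∈ Finset.univ.erase (u b),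
        X (⟨b, j⟩ : Σ i', Fin (k i')))
        (Finset.mem_erase.mpr ⟨hii, Finset.mem_univ _⟩)
    obtain ⟨q, hq⟩ := hdvd1.trans hdvd2
    rw [hq, show MvPolynomial.C ((-1 : 𝕂) ^ (i : ℕ) *
        (Matrix.of fun m l : Fin n₀ => a m (i.succAbove l)).det) * (X ⟨i0, v i0⟩ * q)
      = (MvPolynomial.C ((-1 : 𝕂) ^ (i : ℕ) *
        (Matrix.of fun m l : Fin n₀ => a m (i.succAbove l)).det) * q) * X ⟨i0, v i0⟩ by ring,
      map_mul, hIv]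
    exact Ideal.mul_mem_left _ _ (Ideal.subset_span ⟨i0, rfl⟩)
end
end

section
/- Every locus of the form V(x_{t₁p₁}, x_{t₁p₂}, x_{t₂p₃}, x_{t₂p₄}, x_{t₃p₅}) with {t₁,t₂,t₃} = {1,2,3}, p₁ ≠ p₂, p₃ ≠ p₄ contains some V(I_u) with u ∈ 𝓛; equivalently, for any such data there exists u ∈ 𝓛 with I_u ⊆ (x_{t₁p₁}, x_{t₁p₂}, x_{t₂p₃}, x_{t₂p₄}, x_{t₃p₅}). -/
open MvPolynomial

lemma key18 : ∀ p0 p1 p2 p3 p4 : Fin 3, p0 ≠ p1 → p2 ≠ p3 →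
    ∃ u0 u1 u2 : Fin 3, ((u0 = u1 ∧ u1 = u2) ∨ (u0 ≠ u1 ∧ u0 ≠ u2 ∧ u1 ≠ u2)) ∧
      (u0 = p0 ∨ u0 = p1) ∧ (u1 = p2 ∨ u1 = p3) ∧ u2 = p4 := by decide

/-- Proposition 4.3: every locus `V(x_{t₁p₁}, x_{t₁p₂}, x_{t₂p₃}, x_{t₂p₄}, x_{t₃p₅})`
with `{t₁,t₂,t₃} = {1,2,3}`, `p₁ ≠ p₂` and `p₃ ≠ p₄` contains some `V(I_u)` with
`u ∈ 𝓛`; equivalently, there exists `u ∈ 𝓛` (a constant triple or a permutation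
triple) with `I_u ⊆ (x_{t₁p₁}, x_{t₁p₂}, x_{t₂p₃}, x_{t₂p₄}, x_{t₃p₅})`. -/
theorem stmt_18
    (b : Fin 2 → Fin 3 → ℂ)
    (hminors : ∀ j : Fin 3,
      (Matrix.of fun m i : Fin 2 => b m (j.succAbove i)).det ≠ 0)
    (f : Fin 2 → MvPolynomial (Fin 3 × Fin 3) ℂ)
    (hf : ∀ m, f m = ∑ l : Fin 3,
      MvPolynomial.C (b m l) * ∏ j : Fin 3, MvPolynomial.X (l, j))
    (J : Ideal (MvPolynomial (Fin 3 × Fin 3) ℂ))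
    (hJ : J = Ideal.span (Set.range f))
    (σ : Equiv.Perm (Fin 3)) (p : Fin 5 → Fin 3)
    (hp01 : p 0 ≠ p 1) (hp23 : p 2 ≠ p 3) :
    ∃ u : Fin 3 → Fin 3, ((∀ i j, u i = u j) ∨ Function.Bijective u) ∧
      Ideal.span (Set.range fun i : Fin 3 =>
          Ideal.Quotient.mk J (MvPolynomial.X (i, u i))) ≤
        Ideal.span
          {Ideal.Quotient.mk J (MvPolynomial.X (σ 0, p 0)),
           Ideal.Quotient.mk J (MvPolynomial.X (σ 0, p 1)),
           Ideal.Quotient.mk J (MvPolynomial.X (σ 1, p 2)),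
           Ideal.Quotient.mk J (MvPolynomial.X (σ 1, p 3)),
           Ideal.Quotient.mk J (MvPolynomial.X (σ 2, p 4))} := by
  obtain ⟨u0, u1, u2, hcase, hu0, hu1, hu2⟩ :=
    key18 (p 0) (p 1) (p 2) (p 3) (p 4) hp01 hp23
  refine ⟨![u0, u1, u2] ∘ σ.symm, ?_, ?_⟩
  · rcases hcase with ⟨h01, h12⟩ | ⟨h01, h02, h12⟩
    · left
      have hv : ∀ k : Fin 3, ![u0, u1, u2] k = u0 := by
        intro k; fin_cases k <;> simp [h01, h12, h01.trans h12]
      intro i j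
      simp only [Function.comp_apply, hv]
    · right
      have hv : Function.Injective ![u0, u1, u2] := by
        intro a b h
        fin_cases a <;> fin_cases b <;> simp_all
      exact (Finite.injective_iff_bijective.mp hv).comp σ.symm.bijective
  · rw [Ideal.span_le]
    rintro _ ⟨i, rfl⟩
    obtain ⟨k, rfl⟩ : ∃ k, i = σ k := ⟨σ.symm i, (σ.apply_symm_apply i).symm⟩
    simp only [Function.comp_apply, Equiv.symm_apply_apply]
    apply Ideal.subset_span
    fin_cases k
    · rcases hu0 with h | h <;> simp [h]
    · rcases hu1 with h | h <;> simp [h]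
    · simp [hu2]
end
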